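/- Let n be a positive integer, γ₁, γ₂ ∈ ℂ, and b₁, b₂ ∈ Mat_n(ℂ) with [b₁, b₂] = 0. Suppose u, v : ℂ → Mat_n(ℂ) are differentiable and satisfy u' = −u² + uv + vu − 2zu + b₁u + ub₂ + γ₁·I and v' = −v² + vu + uv + 2zv − b₂v − vb₁ + γ₂·I for all z ∈ ℂ. Then the gauge-transformed functions U(z) = exp(z b₂) u(z) exp(−z b₂) and V(z) = exp(z b₂) v(z) exp(−z b₂) satisfy the canonical P₄⁰ system U' = −U² + UV + VU − 2zU + hU + γ₁·I, V' = −V² + VU + UV + 2zV − Vh + γ₂·I, with h = b₁ + b₂. -/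

import Mathlib

attribute [local instance] Matrix.linftyOpNormedAddCommGroup Matrix.linftyOpNormedSpace

open NormedSpace

attribute [local instance] Matrix.linftyOpNormedRing Matrix.linftyOpNormedAlgebra

private lemma gauge_deriv {n : ℕ} (b : Matrix (Fin n) (Fin n) ℂ)
    (f : ℂ → Matrix (Fin n) (Fin n) ℂ) (f' : Matrix (Fin n) (Fin n) ℂ) (z : ℂ)
    (hf : HasDerivAt f f' z) :
    HasDerivAt (fun z : ℂ => exp (z • b) * f z * exp ((-z) • b))
      (exp (z • b) * b * f z * exp ((-z) • b)
        + exp (z • b) * f' * exp ((-z) • b)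
        - exp (z • b) * f z * (exp ((-z) • b) * b)) z := by
  have hE : HasDerivAt (fun z : ℂ => exp (z • b)) (exp (z • b) * b) z :=
    hasDerivAt_exp_smul_const b z
  have hF : HasDerivAt (fun z : ℂ => exp ((-z) • b)) (-(exp ((-z) • b) * b)) z := by
    have he : (fun z : ℂ => exp ((-z) • b)) = fun z : ℂ => exp (z • (-b)) := by
      funext w; rw [smul_neg, neg_smul]
    rw [he]
    have := (hasDerivAt_exp_smul_const (𝕂 := ℂ) (-b) z)
    simp only [smul_neg, neg_smul, mul_neg] at this ⊢
    exact this
  have h := (hE.mul hf).mul hF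
  refine h.congr_deriv ?_
  simp only [Pi.mul_apply]
  noncomm_ring

/-- A solution of the system (eq:case1tail) with commuting coefficient
matrices `b₁, b₂` is mapped by the gauge transformation
`U = exp(z b₂) u exp(−z b₂)`, `V = exp(z b₂) v exp(−z b₂)` to a solution of the canonical
P₄⁰ system with `h = b₁ + b₂`. -/
theorem gauge_to_canonical_P40 (n : ℕ) (hn : 0 < n) (γ₁ γ₂ : ℂ)
    (b₁ b₂ : Matrix (Fin n) (Fin n) ℂ) (hb : b₁ * b₂ - b₂ * b₁ = 0)
    (u v : ℂ → Matrix (Fin n) (Fin n) ℂ)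
    (hu : ∀ z : ℂ, HasDerivAt u
      (-(u z) ^ 2 + u z * v z + v z * u z - (2 * z) • u z + b₁ * u z + u z * b₂ + γ₁ • 1) z)
    (hv : ∀ z : ℂ, HasDerivAt v
      (-(v z) ^ 2 + v z * u z + u z * v z + (2 * z) • v z - b₂ * v z - v z * b₁ + γ₂ • 1) z) :
    (∀ z : ℂ, HasDerivAt (fun z : ℂ => exp (z • b₂) * u z * exp ((-z) • b₂))
      (-(exp (z • b₂) * u z * exp ((-z) • b₂)) ^ 2
        + (exp (z • b₂) * u z * exp ((-z) • b₂)) * (exp (z • b₂) * v z * exp ((-z) • b₂))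
        + (exp (z • b₂) * v z * exp ((-z) • b₂)) * (exp (z • b₂) * u z * exp ((-z) • b₂))
        - (2 * z) • (exp (z • b₂) * u z * exp ((-z) • b₂))
        + (b₁ + b₂) * (exp (z • b₂) * u z * exp ((-z) • b₂)) + γ₁ • 1) z) ∧
    (∀ z : ℂ, HasDerivAt (fun z : ℂ => exp (z • b₂) * v z * exp ((-z) • b₂))
      (-(exp (z • b₂) * v z * exp ((-z) • b₂)) ^ 2
        + (exp (z • b₂) * v z * exp ((-z) • b₂)) * (exp (z • b₂) * u z * exp ((-z) • b₂))
        + (exp (z • b₂) * u z * exp ((-z) • b₂)) * (exp (z • b₂) * v z * exp ((-z) • b₂))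
        + (2 * z) • (exp (z • b₂) * v z * exp ((-z) • b₂))
        - (exp (z • b₂) * v z * exp ((-z) • b₂)) * (b₁ + b₂) + γ₂ • 1) z) := by
  have hb' : Commute b₁ b₂ := by rwa [Commute, SemiconjBy, ← sub_eq_zero]
  constructor
  · intro z
    have h := gauge_deriv b₂ u _ z (hu z)
    convert h using 1
    set E := exp (z • b₂) with hEdef
    set F := exp ((-z) • b₂) with hFdef
    have hcom : Commute (z • b₂) ((-z) • b₂) := ((Commute.refl b₂).smul_left z).smul_right (-z)
    have hEF : E * F = 1 := by
      rw [hEdef, hFdef, ← Matrix.exp_add_of_commute _ _ hcom, ← add_smul, add_neg_cancel, zero_smul, exp_zero]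
    have hFE : F * E = 1 := by
      rw [hEdef, hFdef, ← Matrix.exp_add_of_commute _ _ hcom.symm, ← add_smul, neg_add_cancel, zero_smul,
        exp_zero]
    have hFE' : ∀ x, F * (E * x) = x := fun x => by rw [← mul_assoc, hFE, one_mul]
    have c2E : Commute b₂ E := ((Commute.refl b₂).smul_right z).exp_right
    have c2F : Commute b₂ F := ((Commute.refl b₂).smul_right (-z)).exp_right
    have c1E : Commute b₁ E := (hb'.smul_right z).exp_right
    have c1F : Commute b₁ F := (hb'.smul_right (-z)).exp_right
    have r2E : ∀ x, b₂ * (E * x) = E * (b₂ * x) := fun x => by rw [← mul_assoc, c2E.eq, mul_assoc]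
    have r2F : ∀ x, b₂ * (F * x) = F * (b₂ * x) := fun x => by rw [← mul_assoc, c2F.eq, mul_assoc]
    have r1E : ∀ x, b₁ * (E * x) = E * (b₁ * x) := fun x => by rw [← mul_assoc, c1E.eq, mul_assoc]
    have r1F : ∀ x, b₁ * (F * x) = F * (b₁ * x) := fun x => by rw [← mul_assoc, c1F.eq, mul_assoc]
    simp only [pow_two, mul_add, add_mul, mul_sub, sub_mul, mul_neg, neg_mul, mul_smul_comm,
      smul_mul_assoc, mul_one, one_mul, mul_assoc, hFE', hEF, hFE, r2E, r2F, r1E, r1F,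
      c2E.eq, c2F.eq, c1E.eq, c1F.eq]
    abel
  · intro z
    have h := gauge_deriv b₂ v _ z (hv z)
    convert h using 1
    set E := exp (z • b₂) with hEdef
    set F := exp ((-z) • b₂) with hFdef
    have hcom : Commute (z • b₂) ((-z) • b₂) := ((Commute.refl b₂).smul_left z).smul_right (-z)
    have hEF : E * F = 1 := by
      rw [hEdef, hFdef, ← Matrix.exp_add_of_commute _ _ hcom, ← add_smul, add_neg_cancel, zero_smul, exp_zero]
    have hFE : F * E = 1 := by
      rw [hEdef, hFdef, ← Matrix.exp_add_of_commute _ _ hcom.symm, ← add_smul, neg_add_cancel, zero_smul,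
        exp_zero]
    have hFE' : ∀ x, F * (E * x) = x := fun x => by rw [← mul_assoc, hFE, one_mul]
    have c2E : Commute b₂ E := ((Commute.refl b₂).smul_right z).exp_right
    have c2F : Commute b₂ F := ((Commute.refl b₂).smul_right (-z)).exp_right
    have c1E : Commute b₁ E := (hb'.smul_right z).exp_right
    have c1F : Commute b₁ F := (hb'.smul_right (-z)).exp_right
    have r2E : ∀ x, b₂ * (E * x) = E * (b₂ * x) := fun x => by rw [← mul_assoc, c2E.eq, mul_assoc]
    have r2F : ∀ x, b₂ * (F * x) = F * (b₂ * x) := fun x => by rw [← mul_assoc, c2F.eq, mul_assoc]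
    have r1E : ∀ x, b₁ * (E * x) = E * (b₁ * x) := fun x => by rw [← mul_assoc, c1E.eq, mul_assoc]
    have r1F : ∀ x, b₁ * (F * x) = F * (b₁ * x) := fun x => by rw [← mul_assoc, c1F.eq, mul_assoc]
    simp only [pow_two, mul_add, add_mul, mul_sub, sub_mul, mul_neg, neg_mul, mul_smul_comm,
      smul_mul_assoc, mul_one, one_mul, mul_assoc, hFE', hEF, hFE, r2E, r2F, r1E, r1F,
      c2E.eq, c2F.eq, c1E.eq, c1F.eq]
    abel
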